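/- For all integers m, n ≥ 0, gcd(15226^m − 67419^n, 7·13·19·31) > 1. -/

import Mathlib

lemma cov_key (p : ℕ) [NeZero p] (a b : ℤ) (m n : ℕ)
    (ha : (a : ZMod p) ^ 3 = 1) (hb : (b : ZMod p) ^ 3 = 1)
    (h : (a : ZMod p) ^ (m % 3) = (b : ZMod p) ^ (n % 3)) :
    (p : ℤ) ∣ a ^ m - b ^ n := by
  rw [← ZMod.intCast_zmod_eq_zero_iff_dvd]
  push_cast
  conv_lhs => rw [← Nat.div_add_mod m 3, ← Nat.div_add_mod n 3]
  rw [pow_add, pow_add, pow_mul, pow_mul, ha, hb, one_pow, one_pow, one_mul, one_mul,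
    h, sub_self]

lemma cov_gcd (p : ℕ) (hp : 1 < p) (a : ℤ) (h : (p : ℤ) ∣ a)
    (hpd : (p : ℤ) ∣ (7 * 13 * 19 * 31 : ℤ)) :
    1 < Int.gcd a (7 * 13 * 19 * 31) := by
  have h2 : (p : ℤ) ∣ (Int.gcd a (7 * 13 * 19 * 31) : ℤ) := Int.dvd_coe_gcd h hpd
  have h3 : p ∣ Int.gcd a (7 * 13 * 19 * 31) := Int.ofNat_dvd.mp h2
  have h4 : Int.gcd a (7 * 13 * 19 * 31) ≠ 0 := by
    simp [Int.gcd_eq_zero_iff]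
  exact lt_of_lt_of_le hp (Nat.le_of_dvd (Nat.pos_of_ne_zero h4) h3)

/-- `gcd(15226^m - 67419^n, 7·13·19·31) > 1` for all integers `m, n ≥ 0`. -/
theorem covering_example_15226_67419 :
    ∀ m n : ℕ, 1 < Int.gcd ((15226 : ℤ) ^ m - (67419 : ℤ) ^ n) (7 * 13 * 19 * 31) := by
  intro m n
  have hm : m % 3 = 0 ∨ m % 3 = 1 ∨ m % 3 = 2 := by omega
  have hn : n % 3 = 0 ∨ n % 3 = 1 ∨ n % 3 = 2 := by omega
  rcases hm with hm | hm | hm <;> rcases hn with hn | hn | hn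
  · exact cov_gcd 13 (by norm_num) _ (cov_key 13 _ _ m n (by decide) (by decide)
      (by rw [hm, hn]; decide)) (by norm_num)
  · exact cov_gcd 13 (by norm_num) _ (cov_key 13 _ _ m n (by decide) (by decide)
      (by rw [hm, hn]; decide)) (by norm_num)
  · exact cov_gcd 13 (by norm_num) _ (cov_key 13 _ _ m n (by decide) (by decide)
      (by rw [hm, hn]; decide)) (by norm_num)
  · exact cov_gcd 7 (by norm_num) _ (cov_key 7 _ _ m n (by decide) (by decide)
      (by rw [hm, hn]; decide)) (by norm_num)
  · exact cov_gcd 19 (by norm_num) _ (cov_key 19 _ _ m n (by decide) (by decide)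
      (by rw [hm, hn]; decide)) (by norm_num)
  · exact cov_gcd 31 (by norm_num) _ (cov_key 31 _ _ m n (by decide) (by decide)
      (by rw [hm, hn]; decide)) (by norm_num)
  · exact cov_gcd 7 (by norm_num) _ (cov_key 7 _ _ m n (by decide) (by decide)
      (by rw [hm, hn]; decide)) (by norm_num)
  · exact cov_gcd 31 (by norm_num) _ (cov_key 31 _ _ m n (by decide) (by decide)
      (by rw [hm, hn]; decide)) (by norm_num)
  · exact cov_gcd 19 (by norm_num) _ (cov_key 19 _ _ m n (by decide) (by decide)
      (by rw [hm, hn]; decide)) (by norm_num)
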